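/- arXiv:2407.16683 — 2 statements merged into one kernel-verified Lean document; each statement's English description precedes it below -/
import Mathlib

section
/- Gluing lemma for ∀-free sentences: let V be a Gödel set, I a V-interpretation, and ω ∈ [0,1) a fixed value. Define the interpretation I_ω on atomic sentences by I_ω(P)=I(P) if I(P)≤ω and I_ω(P)=1 otherwise (same domain and function interpretations). Then I_ω is a V-interpretation, and for every sentence B (with parameters from the domain) that contains no universal quantifier, I_ω(B)=I(B) if I(B)≤ω and I_ω(B)=1 otherwise. -/
namespace GodelPaper

/-- A first-order language: function and relation symbols of each arity. -/
structure Lang where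
  Func : ℕ → Type
  Rel : ℕ → Type

/-- A Gödel set: a closed subset of [0,1] containing 0 and 1. -/
def GodelSet (V : Set ℝ) : Prop :=
  IsClosed V ∧ V ⊆ Set.Icc 0 1 ∧ (0:ℝ) ∈ V ∧ (1:ℝ) ∈ V

/-- Terms with variables from `α`. -/
inductive Term (L : Lang) (α : Type) : Type
  | var : α → Term L α
  | func : ∀ {k}, L.Func k → (Fin k → Term L α) → Term L α

/-- A `V`-interpretation: nonempty domain, interpretation of function symbols,
and truth values in `V` for atomic sentences with parameters. -/
structure Interp (L : Lang) (V : Set ℝ) where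
  Dom : Type
  dom_nonempty : Nonempty Dom
  funMap : ∀ {k}, L.Func k → (Fin k → Dom) → Dom
  relVal : ∀ {k}, L.Rel k → (Fin k → Dom) → ℝ
  relVal_mem : ∀ {k} (R : L.Rel k) (v : Fin k → Dom), relVal R v ∈ V

def Term.eval {L : Lang} {V : Set ℝ} (I : Interp L V) {α : Type} (v : α → I.Dom) :
    Term L α → I.Dom
  | .var i => v i
  | .func f ts => I.funMap f fun j => Term.eval I v (ts j)

/-- Formulas of the Δ-extended language, with free variables among `Fin n`.
The quantifiers bind the *last* variable. Δ-free formulas (i.e. formulas of the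
plain language) are singled out by the predicate `DeltaFree` below. -/
inductive Form (L : Lang) : ℕ → Type
  | falsum : ∀ {n}, Form L n
  | atom : ∀ {n k}, L.Rel k → (Fin k → Term L (Fin n)) → Form L n
  | conj : ∀ {n}, Form L n → Form L n → Form L n
  | disj : ∀ {n}, Form L n → Form L n → Form L n
  | impl : ∀ {n}, Form L n → Form L n → Form L n
  | delta : ∀ {n}, Form L n → Form L n
  | all : ∀ {n}, Form L (n+1) → Form L n
  | ex : ∀ {n}, Form L (n+1) → Form L n

/-- The Gödel truth value of a formula under an interpretation and an
assignment of the free variables. -/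
noncomputable def Form.val {L : Lang} {V : Set ℝ} (I : Interp L V) :
    ∀ {n}, Form L n → (Fin n → I.Dom) → ℝ
  | _, .falsum, _ => 0
  | _, .atom R ts, ρ => I.relVal R fun j => Term.eval I ρ (ts j)
  | _, .conj A B, ρ => min (Form.val I A ρ) (Form.val I B ρ)
  | _, .disj A B, ρ => max (Form.val I A ρ) (Form.val I B ρ)
  | _, .impl A B, ρ => if Form.val I A ρ ≤ Form.val I B ρ then 1 else Form.val I B ρ
  | _, .delta A, ρ => if Form.val I A ρ = 1 then 1 else 0
  | _, .all A, ρ => sInf {v : ℝ | ∃ d : I.Dom, v = Form.val I A (Fin.snoc ρ d)}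
  | _, .ex A, ρ => sSup {v : ℝ | ∃ d : I.Dom, v = Form.val I A (Fin.snoc ρ d)}

/-- The value of a sentence. -/
noncomputable def Form.sval {L : Lang} {V : Set ℝ} (I : Interp L V) (A : Form L 0) : ℝ :=
  Form.val I A Fin.elim0

/-- `A` is valid in `G_V`. -/
def Valid {L : Lang} (V : Set ℝ) (A : Form L 0) : Prop :=
  ∀ I : Interp L V, Form.sval I A = 1

/-- `A` is 1-satisfiable in `G_V`. -/
def OneSat {L : Lang} (V : Set ℝ) (A : Form L 0) : Prop :=
  ∃ I : Interp L V, Form.sval I A = 1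

/-- `A` is classically satisfiable: it takes value 1 under a `V`-interpretation
assigning only values in {0,1} to atomic sentences. -/
def ClassSat {L : Lang} (V : Set ℝ) (A : Form L 0) : Prop :=
  ∃ I : Interp L V,
    (∀ {k : ℕ} (R : L.Rel k) (v : Fin k → I.Dom), I.relVal R v = 0 ∨ I.relVal R v = 1) ∧
    Form.sval I A = 1

/-- ¬A abbreviates A ⊃ ⊥. -/
def Form.not {L : Lang} {n : ℕ} (A : Form L n) : Form L n := Form.impl A Form.falsum

/-- A ↔ B abbreviates (A ⊃ B) ∧ (B ⊃ A). -/
def Form.iff {L : Lang} {n : ℕ} (A B : Form L n) : Form L n :=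
  Form.conj (Form.impl A B) (Form.impl B A)

/-- Formulas of the plain language (no Δ). -/
def DeltaFree {L : Lang} : ∀ {n}, Form L n → Prop
  | _, .falsum => True
  | _, .atom _ _ => True
  | _, .conj A B => DeltaFree A ∧ DeltaFree B
  | _, .disj A B => DeltaFree A ∧ DeltaFree B
  | _, .impl A B => DeltaFree A ∧ DeltaFree B
  | _, .delta _ => False
  | _, .all A => DeltaFree A
  | _, .ex A => DeltaFree A

/-- Quantifier-free formulas. -/
def QuantFree {L : Lang} : ∀ {n}, Form L n → Prop
  | _, .falsum => True
  | _, .atom _ _ => True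
  | _, .conj A B => QuantFree A ∧ QuantFree B
  | _, .disj A B => QuantFree A ∧ QuantFree B
  | _, .impl A B => QuantFree A ∧ QuantFree B
  | _, .delta A => QuantFree A
  | _, .all _ => False
  | _, .ex _ => False

/-- Formulas containing no universal quantifier. -/
def AllFree {L : Lang} : ∀ {n}, Form L n → Prop
  | _, .falsum => True
  | _, .atom _ _ => True
  | _, .conj A B => AllFree A ∧ AllFree B
  | _, .disj A B => AllFree A ∧ AllFree B
  | _, .impl A B => AllFree A ∧ AllFree B
  | _, .delta A => AllFree A
  | _, .all _ => False
  | _, .ex A => AllFree A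

/-- Prenex formulas: a block of quantifiers followed by a quantifier-free matrix. -/
inductive IsPrenex {L : Lang} : ∀ {n}, Form L n → Prop
  | qf {n} {A : Form L n} : QuantFree A → IsPrenex A
  | all {n} {A : Form L (n+1)} : IsPrenex A → IsPrenex (Form.all A)
  | ex {n} {A : Form L (n+1)} : IsPrenex A → IsPrenex (Form.ex A)

/-- Purely existential prenex formulas. -/
inductive ExPrenex {L : Lang} : ∀ {n}, Form L n → Prop
  | qf {n} {A : Form L n} : QuantFree A → ExPrenex A
  | ex {n} {A : Form L (n+1)} : ExPrenex A → ExPrenex (Form.ex A)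

/-- The glued interpretation `I_ω`: atoms with value ≤ ω keep their value,
all other atoms get value 1. Same domain and function interpretations. -/
noncomputable def Interp.glue {L : Lang} {V : Set ℝ} (I : Interp L V) (ω : ℝ)
    (h1 : (1:ℝ) ∈ V) : Interp L V where
  Dom := I.Dom
  dom_nonempty := I.dom_nonempty
  funMap := fun {k} f v => I.funMap f v
  relVal := fun {k} R v => if I.relVal R v ≤ ω then I.relVal R v else 1
  relVal_mem := fun {k} R v => by
    by_cases h : I.relVal R v ≤ ω
    · simpa [h] using I.relVal_mem R v
    · simpa [h] using h1

/-- The Gödel set `V_↑ = {1 - 1/k : k ≥ 1} ∪ {1}`. -/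
def Vup : Set ℝ := {x : ℝ | ∃ k : ℕ, 1 ≤ k ∧ x = 1 - 1/(k:ℝ)} ∪ {1}

/-- The `m`-element Gödel set `V_m = {1 - 1/k : 1 ≤ k ≤ m-1} ∪ {1}`. -/
def Vfin (m : ℕ) : Set ℝ :=
  {x : ℝ | ∃ k : ℕ, 1 ≤ k ∧ k ≤ m - 1 ∧ x = 1 - 1/(k:ℝ)} ∪ {1}

/-- Atomic formula built from a unary predicate. -/
def atom1 {L : Lang} (P : L.Rel 1) {n : ℕ} (t : Term L (Fin n)) : Form L n :=
  Form.atom P fun _ => t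

/-- Atomic formula built from a 0-ary predicate (propositional atom). -/
def atom0 {L : Lang} (X : L.Rel 0) {n : ℕ} : Form L n :=
  Form.atom X fun i => i.elim0

def Term.rename {L : Lang} {α β : Type} (f : α → β) : Term L α → Term L β
  | .var i => .var (f i)
  | .func g ts => .func g fun j => Term.rename f (ts j)

def Form.rename {L : Lang} : ∀ {m n}, (Fin m → Fin n) → Form L m → Form L n
  | _, _, _, .falsum => .falsum
  | _, _, f, .atom R ts => .atom R fun j => (ts j).rename f
  | _, _, f, .conj A B => .conj (A.rename f) (B.rename f)
  | _, _, f, .disj A B => .disj (A.rename f) (B.rename f)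
  | _, _, f, .impl A B => .impl (A.rename f) (B.rename f)
  | _, _, f, .delta A => .delta (A.rename f)
  | _, _, f, .all A =>
      .all (A.rename (Fin.lastCases (Fin.last _) fun i => Fin.castSucc (f i)))
  | _, _, f, .ex A =>
      .ex (A.rename (Fin.lastCases (Fin.last _) fun i => Fin.castSucc (f i)))

/-- Weakening: regard a formula with `n` free variables as one with `n+1`
free variables (not using the new last variable). -/
def Form.lift {L : Lang} {n : ℕ} (A : Form L n) : Form L (n+1) :=
  A.rename Fin.castSucc

def Term.subst {L : Lang} {α β : Type} (σ : α → Term L β) : Term L α → Term L β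
  | .var i => σ i
  | .func g ts => .func g fun j => Term.subst σ (ts j)

def Form.subst {L : Lang} : ∀ {m n}, (Fin m → Term L (Fin n)) → Form L m → Form L n
  | _, _, _, .falsum => .falsum
  | _, _, σ, .atom R ts => .atom R fun j => (ts j).subst σ
  | _, _, σ, .conj A B => .conj (A.subst σ) (B.subst σ)
  | _, _, σ, .disj A B => .disj (A.subst σ) (B.subst σ)
  | _, _, σ, .impl A B => .impl (A.subst σ) (B.subst σ)
  | _, _, σ, .delta A => .delta (A.subst σ)
  | _, _, σ, .all A =>
      .all (A.subst (Fin.lastCases (.var (Fin.last _))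
        fun i => (σ i).rename Fin.castSucc))
  | _, _, σ, .ex A =>
      .ex (A.subst (Fin.lastCases (.var (Fin.last _))
        fun i => (σ i).rename Fin.castSucc))

/-- The language `L ∪ {f}` with one new function symbol of arity `a`. -/
def Lang.addFunc (L : Lang) (a : ℕ) : Lang where
  Func := fun k => L.Func k ⊕ PLift (k = a)
  Rel := L.Rel

/-- The new function symbol of `L.addFunc a`. -/
def newFunc (L : Lang) (a : ℕ) : (L.addFunc a).Func a := Sum.inr ⟨rfl⟩

def Term.emb {L : Lang} {a : ℕ} {α : Type} : Term L α → Term (L.addFunc a) α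
  | .var i => .var i
  | .func g ts => .func (Sum.inl g) fun j => Term.emb (ts j)

/-- Embedding of `L`-formulas into the language with the extra function symbol. -/
def Form.emb {L : Lang} {a : ℕ} : ∀ {n}, Form L n → Form (L.addFunc a) n
  | _, .falsum => .falsum
  | _, .atom R ts => .atom R fun j => (ts j).emb
  | _, .conj A B => .conj A.emb B.emb
  | _, .disj A B => .disj A.emb B.emb
  | _, .impl A B => .impl A.emb B.emb
  | _, .delta A => .delta A.emb
  | _, .all A => .all A.emb
  | _, .ex A => .ex A.emb

/-- Prefix of `n` existential quantifiers (outermost quantifier binds variable 0). -/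
def Form.exN {L : Lang} : ∀ n, Form L n → Form L 0
  | 0, A => A
  | n+1, A => Form.exN n (Form.ex A)

/-- Prefix of `n` universal quantifiers (outermost quantifier binds variable 0). -/
def Form.allN {L : Lang} : ∀ n, Form L n → Form L 0
  | 0, A => A
  | n+1, A => Form.allN n (Form.all A)

/-- All truth values lie in [0,1]. -/
lemma val_mem_Icc {L : Lang} {V : Set ℝ} (hV : V ⊆ Set.Icc 0 1) (I : Interp L V) :
    ∀ {n : ℕ} (B : Form L n) (ρ : Fin n → I.Dom), Form.val I B ρ ∈ Set.Icc (0:ℝ) 1 := by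
  intro n B
  induction B with
  | falsum => intro ρ; simp [Form.val]
  | atom R ts => intro ρ; exact hV (I.relVal_mem R _)
  | conj A B ihA ihB =>
      intro ρ
      exact ⟨le_min (ihA ρ).1 (ihB ρ).1, min_le_of_left_le (ihA ρ).2⟩
  | disj A B ihA ihB =>
      intro ρ
      exact ⟨le_max_of_le_left (ihA ρ).1, max_le (ihA ρ).2 (ihB ρ).2⟩
  | impl A B ihA ihB =>
      intro ρ
      simp only [Form.val]
      split
      · exact ⟨zero_le_one, le_rfl⟩
      · exact ihB ρ
  | delta A ih =>
      intro ρ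
      simp only [Form.val]
      split
      · exact ⟨zero_le_one, le_rfl⟩
      · exact ⟨le_rfl, zero_le_one⟩
  | all A ih =>
      intro ρ
      obtain ⟨d⟩ := I.dom_nonempty
      constructor
      · exact le_csInf ⟨_, ⟨d, rfl⟩⟩ (by rintro v ⟨e, rfl⟩; exact (ih _).1)
      · exact csInf_le_of_le ⟨0, by rintro v ⟨e, rfl⟩; exact (ih _).1⟩
          ⟨d, rfl⟩ (ih _).2
  | ex A ih =>
      intro ρ
      obtain ⟨d⟩ := I.dom_nonempty
      constructor
      · exact le_csSup_of_le ⟨1, by rintro v ⟨e, rfl⟩; exact (ih _).2⟩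
          ⟨d, rfl⟩ (ih _).1
      · exact csSup_le ⟨_, ⟨d, rfl⟩⟩ (by rintro v ⟨e, rfl⟩; exact (ih _).2)

lemma glue_min {a b w : ℝ} (ha : a ≤ 1) (hb : b ≤ 1) :
    min (if a ≤ w then a else 1) (if b ≤ w then b else 1) =
      if min a b ≤ w then min a b else 1 := by
  rcases le_total a b with h | h <;> simp only [min_def] <;> split_ifs <;>
    first | rfl | linarith

lemma glue_max {a b w : ℝ} (ha : a ≤ 1) (hb : b ≤ 1) :
    max (if a ≤ w then a else 1) (if b ≤ w then b else 1) =
      if max a b ≤ w then max a b else 1 := by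
  rcases le_total a b with h | h <;> simp only [max_def] <;> split_ifs <;>
    first | rfl | linarith

lemma glue_impl {a b w : ℝ} (hw : w < 1) (hb : b ≤ 1) :
    (if (if a ≤ w then a else 1) ≤ (if b ≤ w then b else 1) then (1:ℝ)
      else (if b ≤ w then b else 1)) =
      if (if a ≤ b then (1:ℝ) else b) ≤ w then (if a ≤ b then (1:ℝ) else b) else 1 := by
  split_ifs <;> first | rfl | linarith

lemma glue_term_eval {L : Lang} {V : Set ℝ} (I : Interp L V) (ω : ℝ) (h1 : (1:ℝ) ∈ V)
    {n : ℕ} (ρ : Fin n → I.Dom) (t : Term L (Fin n)) :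
    Term.eval (I.glue ω h1) ρ t = Term.eval I ρ t := by
  induction t with
  | var i => rfl
  | func g ts ih => exact congrArg (I.funMap g) (funext fun j => ih j)

/-- Gluing lemma for sentences without universal quantifiers:
`I_ω` is a `V`-interpretation (this is expressed by its type `Interp L V`), and
for every ∀-free formula `B` (a sentence with parameters, i.e. a formula
together with an assignment `ρ` of its free variables),
`I_ω(B) = I(B)` if `I(B) ≤ ω` and `I_ω(B) = 1` otherwise. -/
theorem stmt_1 {L : Lang} {V : Set ℝ} (hV : GodelSet V) (I : Interp L V)
    (ω : ℝ) (hω : ω ∈ Set.Ico (0:ℝ) 1) :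
    ∀ {n : ℕ} (B : Form L n), DeltaFree B → AllFree B →
      ∀ ρ : Fin n → I.Dom,
        Form.val (I.glue ω hV.2.2.2) B ρ =
          if Form.val I B ρ ≤ ω then Form.val I B ρ else 1 := by
  have hsub := hV.2.1
  have hω1 : ω < 1 := hω.2
  intro n B
  induction B with
  | falsum =>
      intro _ _ ρ
      simp [Form.val, hω.1]
  | atom R ts =>
      intro _ _ ρ
      show (if (I.relVal R fun j => Term.eval (I.glue ω hV.2.2.2) ρ (ts j)) ≤ ω
          then I.relVal R fun j => Term.eval (I.glue ω hV.2.2.2) ρ (ts j) else 1) = _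
      have : (fun j => Term.eval (I.glue ω hV.2.2.2) ρ (ts j)) =
          fun j => Term.eval I ρ (ts j) :=
        funext fun j => glue_term_eval I ω hV.2.2.2 ρ (ts j)
      rw [this]
      rfl
  | conj A B ihA ihB =>
      rintro ⟨dA, dB⟩ ⟨aA, aB⟩ ρ
      simp only [Form.val, ihA dA aA ρ, ihB dB aB ρ]
      exact glue_min (val_mem_Icc hsub I A ρ).2 (val_mem_Icc hsub I B ρ).2
  | disj A B ihA ihB =>
      rintro ⟨dA, dB⟩ ⟨aA, aB⟩ ρ
      simp only [Form.val, ihA dA aA ρ, ihB dB aB ρ]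
      exact glue_max (val_mem_Icc hsub I A ρ).2 (val_mem_Icc hsub I B ρ).2
  | impl A B ihA ihB =>
      rintro ⟨dA, dB⟩ ⟨aA, aB⟩ ρ
      simp only [Form.val, ihA dA aA ρ, ihB dB aB ρ]
      exact glue_impl hω1 (val_mem_Icc hsub I B ρ).2
  | delta A ih =>
      rintro hd _ ρ
      exact absurd hd id
  | all A ih =>
      rintro _ ha ρ
      exact absurd ha id
  | ex A ih =>
      rintro hd ha ρ
      obtain ⟨d0⟩ := I.dom_nonempty
      have hglue : ∀ d : I.Dom, Form.val (I.glue ω hV.2.2.2) A (Fin.snoc ρ d) =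
          if Form.val I A (Fin.snoc ρ d) ≤ ω then Form.val I A (Fin.snoc ρ d) else 1 :=
        fun d => ih hd ha (Fin.snoc ρ d)
      have hbdd : BddAbove {v : ℝ | ∃ d : I.Dom, v = Form.val I A (Fin.snoc ρ d)} :=
        ⟨1, by rintro v ⟨e, rfl⟩; exact (val_mem_Icc hsub I A _).2⟩
      have hne : {v : ℝ | ∃ d : I.Dom, v = Form.val I A (Fin.snoc ρ d)}.Nonempty :=
        ⟨_, d0, rfl⟩
      show sSup {v : ℝ | ∃ d : I.Dom, v = Form.val (I.glue ω hV.2.2.2) A (Fin.snoc ρ d)} =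
        if sSup {v : ℝ | ∃ d : I.Dom, v = Form.val I A (Fin.snoc ρ d)} ≤ ω
          then sSup {v : ℝ | ∃ d : I.Dom, v = Form.val I A (Fin.snoc ρ d)} else 1
      by_cases hc : sSup {v : ℝ | ∃ d : I.Dom, v = Form.val I A (Fin.snoc ρ d)} ≤ ω
      · rw [if_pos hc]
        have hset : {v : ℝ | ∃ d : I.Dom, v = Form.val (I.glue ω hV.2.2.2) A (Fin.snoc ρ d)} =
            {v : ℝ | ∃ d : I.Dom, v = Form.val I A (Fin.snoc ρ d)} := by
          ext v
          constructor
          · rintro ⟨d, rfl⟩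
            rw [hglue d, if_pos (le_trans (le_csSup hbdd ⟨d, rfl⟩) hc)]
            exact ⟨d, rfl⟩
          · rintro ⟨d, rfl⟩
            exact ⟨d, by rw [hglue d, if_pos (le_trans (le_csSup hbdd ⟨d, rfl⟩) hc)]⟩
        rw [hset]
      · rw [if_neg hc]
        push_neg at hc
        obtain ⟨v, ⟨d, rfl⟩, hv⟩ :
            ∃ v ∈ {v : ℝ | ∃ d : I.Dom, v = Form.val I A (Fin.snoc ρ d)}, ω < v := by
          by_contra hcon
          push_neg at hcon
          exact absurd (csSup_le hne hcon) (not_le.mpr hc)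
        have hub : ∀ v ∈ {v : ℝ | ∃ d : I.Dom,
            v = Form.val (I.glue ω hV.2.2.2) A (Fin.snoc ρ d)}, v ≤ 1 := by
          rintro v ⟨e, rfl⟩
          rw [hglue e]
          split
          · linarith
          · exact le_rfl
        apply le_antisymm
        · exact csSup_le ⟨_, d, rfl⟩ hub
        · refine le_csSup ⟨1, hub⟩ ⟨d, ?_⟩
          rw [hglue d, if_neg (not_le.mpr hv)]

end GodelPaper
end

section
/- Gluing lemma for all sentences: let V be a Gödel set, I a V-interpretation, and ω ∈ [0,1) a value that is isolated in V from above, i.e., V ∩ (ω, ω+ε) = ∅ for some ε > 0. Define I_ω on atomic sentences by I_ω(P)=I(P) if I(P)≤ω and I_ω(P)=1 otherwise. Then for every sentence B (with parameters from the domain), including sentences containing universal quantifiers, I_ω(B)=I(B) if I(B)≤ω and I_ω(B)=1 otherwise. -/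
namespace GodelPaper

lemma eval_glue {L : Lang} {V : Set ℝ} (I : Interp L V) (ω : ℝ) (h1 : (1:ℝ) ∈ V)
    {α : Type} (v : α → I.Dom) (t : Term L α) :
    Term.eval (I.glue ω h1) v t = Term.eval I v t := by
  induction t with
  | var i => rfl
  | func f ts ih =>
    show I.funMap f _ = I.funMap f _
    exact congrArg _ (funext fun j => ih j)

lemma val_mem {L : Lang} {V : Set ℝ} (hV : GodelSet V) (I : Interp L V) :
    ∀ {n : ℕ} (B : Form L n) (ρ : Fin n → I.Dom), Form.val I B ρ ∈ V := by
  intro n B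
  induction B with
  | falsum => intro ρ; exact hV.2.2.1
  | atom R ts => intro ρ; exact I.relVal_mem R _
  | conj A B ihA ihB =>
    intro ρ
    rcases le_total (Form.val I A ρ) (Form.val I B ρ) with h | h
    · simpa [Form.val, min_eq_left h] using ihA ρ
    · simpa [Form.val, min_eq_right h] using ihB ρ
  | disj A B ihA ihB =>
    intro ρ
    rcases le_total (Form.val I A ρ) (Form.val I B ρ) with h | h
    · simpa [Form.val, max_eq_right h] using ihB ρ
    · simpa [Form.val, max_eq_left h] using ihA ρ
  | impl A B ihA ihB =>
    intro ρ
    by_cases h : Form.val I A ρ ≤ Form.val I B ρ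
    · simpa [Form.val, h] using hV.2.2.2
    · simpa [Form.val, h] using ihB ρ
  | delta A ih =>
    intro ρ
    by_cases h : Form.val I A ρ = 1 <;> simp [Form.val, h, hV.2.2.1, hV.2.2.2]
  | all A ih =>
    intro ρ
    have hne : {v : ℝ | ∃ d : I.Dom, v = Form.val I A (Fin.snoc ρ d)}.Nonempty := by
      obtain ⟨d⟩ := I.dom_nonempty; exact ⟨_, d, rfl⟩
    have hsub : {v : ℝ | ∃ d : I.Dom, v = Form.val I A (Fin.snoc ρ d)} ⊆ V := by
      rintro v ⟨d, rfl⟩; exact ih _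
    have hbdd : BddBelow {v : ℝ | ∃ d : I.Dom, v = Form.val I A (Fin.snoc ρ d)} := by
      refine ⟨0, ?_⟩; rintro v ⟨d, rfl⟩; exact (hV.2.1 (ih _)).1
    have := csInf_mem_closure hne hbdd
    exact (hV.1.closure_subset_iff.mpr hsub) this
  | ex A ih =>
    intro ρ
    have hne : {v : ℝ | ∃ d : I.Dom, v = Form.val I A (Fin.snoc ρ d)}.Nonempty := by
      obtain ⟨d⟩ := I.dom_nonempty; exact ⟨_, d, rfl⟩
    have hsub : {v : ℝ | ∃ d : I.Dom, v = Form.val I A (Fin.snoc ρ d)} ⊆ V := by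
      rintro v ⟨d, rfl⟩; exact ih _
    have hbdd : BddAbove {v : ℝ | ∃ d : I.Dom, v = Form.val I A (Fin.snoc ρ d)} := by
      refine ⟨1, ?_⟩; rintro v ⟨d, rfl⟩; exact (hV.2.1 (ih _)).2
    have := csSup_mem_closure hne hbdd
    exact (hV.1.closure_subset_iff.mpr hsub) this

/-- Gluing lemma for all sentences: if `ω ∈ [0,1)` is isolated in
`V` from above (`V ∩ (ω, ω+ε) = ∅` for some `ε > 0`), then for every formula
`B` (with parameters given by an assignment `ρ`), including formulas with
universal quantifiers, `I_ω(B) = I(B)` if `I(B) ≤ ω` and `I_ω(B) = 1`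
otherwise. -/
theorem stmt_2 {L : Lang} {V : Set ℝ} (hV : GodelSet V) (I : Interp L V)
    (ω : ℝ) (hω : ω ∈ Set.Ico (0:ℝ) 1)
    (hiso : ∃ ε > (0:ℝ), V ∩ Set.Ioo ω (ω + ε) = ∅) :
    ∀ {n : ℕ} (B : Form L n), DeltaFree B →
      ∀ ρ : Fin n → I.Dom,
        Form.val (I.glue ω hV.2.2.2) B ρ =
          if Form.val I B ρ ≤ ω then Form.val I B ρ else 1 := by
  obtain ⟨ε, hε, hcap⟩ := hiso
  have hlb : ∀ x ∈ V, (0:ℝ) ≤ x := fun x hx => (hV.2.1 hx).1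
  have hub : ∀ x ∈ V, x ≤ (1:ℝ) := fun x hx => (hV.2.1 hx).2
  have hω1 : ω < 1 := hω.2
  intro n B
  induction B with
  | falsum =>
    intro _ ρ
    simp [Form.val, le_of_lt (lt_of_le_of_lt hω.1 hω1), hω.1]
  | atom R ts =>
    intro _ ρ
    simp only [Form.val]
    have hev : ∀ j, Term.eval (I.glue ω hV.2.2.2) ρ (ts j) = Term.eval I ρ (ts j) :=
      fun j => eval_glue I ω hV.2.2.2 ρ (ts j)
    show (I.glue ω hV.2.2.2).relVal R _ = _
    rw [show (fun j => Term.eval (I.glue ω hV.2.2.2) ρ (ts j)) = fun j => Term.eval I ρ (ts j)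
      from funext hev]
    rfl
  | conj A B ihA ihB =>
    rintro ⟨hA, hB⟩ ρ
    simp only [Form.val, ihA hA ρ, ihB hB ρ]
    show _ = if _ ≤ ω then _ else 1
    have ha1 := hub _ (val_mem hV I A ρ)
    have hb1 := hub _ (val_mem hV I B ρ)
    rcases le_or_gt (Form.val I A ρ) ω with hA' | hA' <;>
      rcases le_or_gt (Form.val I B ρ) ω with hB' | hB'
    · rw [if_pos hA', if_pos hB', if_pos (le_trans (min_le_left _ _) hA')]
    · rw [if_pos hA', if_neg (not_le.mpr hB'), if_pos (le_trans (min_le_left _ _) hA'),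
        min_eq_left ha1, min_eq_left (le_trans hA' hB'.le)]
    · rw [if_neg (not_le.mpr hA'), if_pos hB', if_pos (le_trans (min_le_right _ _) hB'),
        min_eq_right hb1, min_eq_right (le_trans hB' hA'.le)]
    · rw [if_neg (not_le.mpr hA'), if_neg (not_le.mpr hB'),
        if_neg (not_le.mpr (lt_min hA' hB')), min_self]
  | disj A B ihA ihB =>
    rintro ⟨hA, hB⟩ ρ
    simp only [Form.val, ihA hA ρ, ihB hB ρ]
    show _ = if _ ≤ ω then _ else 1
    have ha1 := hub _ (val_mem hV I A ρ)
    have hb1 := hub _ (val_mem hV I B ρ)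
    rcases le_or_gt (Form.val I A ρ) ω with hA' | hA' <;>
      rcases le_or_gt (Form.val I B ρ) ω with hB' | hB'
    · rw [if_pos hA', if_pos hB', if_pos (max_le hA' hB')]
    · rw [if_pos hA', if_neg (not_le.mpr hB'),
        if_neg (not_le.mpr (lt_of_lt_of_le hB' (le_max_right _ _))), max_eq_right ha1]
    · rw [if_neg (not_le.mpr hA'), if_pos hB',
        if_neg (not_le.mpr (lt_of_lt_of_le hA' (le_max_left _ _))), max_eq_left hb1]
    · rw [if_neg (not_le.mpr hA'), if_neg (not_le.mpr hB'),
        if_neg (not_le.mpr (lt_of_lt_of_le hA' (le_max_left _ _))), max_self]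
  | impl A B ihA ihB =>
    rintro ⟨hA, hB⟩ ρ
    simp only [Form.val, ihA hA ρ, ihB hB ρ]
    show _ = if _ ≤ ω then _ else 1
    have ha1 := hub _ (val_mem hV I A ρ)
    have hb1 := hub _ (val_mem hV I B ρ)
    have ha'1 : (if Form.val I A ρ ≤ ω then Form.val I A ρ else 1) ≤ 1 := by
      split_ifs with h
      · exact ha1
      · exact le_refl 1
    by_cases h : Form.val I A ρ ≤ Form.val I B ρ
    · rw [if_pos h, if_neg (not_le.mpr hω1)]
      rcases le_or_gt (Form.val I B ρ) ω with hB' | hB'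
      · rw [if_pos (le_trans h hB'), if_pos hB', if_pos h]
      · rw [if_neg (not_le.mpr hB'), if_pos ha'1]
    · have hba := not_le.mp h
      rw [if_neg h]
      rcases le_or_gt (Form.val I B ρ) ω with hB' | hB'
      · rw [if_pos hB']
        rcases le_or_gt (Form.val I A ρ) ω with hA' | hA'
        · rw [if_pos hA', if_neg (not_le.mpr hba)]
        · rw [if_neg (not_le.mpr hA'),
            if_neg (not_le.mpr (lt_of_le_of_lt hB' hω1))]
      · rw [if_neg (not_le.mpr hB'), if_pos ha'1]
  | delta A ih => intro h; exact h.elim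
  | all A ih =>
    intro hA ρ
    simp only [Form.val]
    show _ = if _ ≤ ω then _ else 1
    set S : Set ℝ := {v : ℝ | ∃ d : I.Dom, v = Form.val I A (Fin.snoc ρ d)} with hS
    set T : Set ℝ := {v : ℝ | ∃ d : I.Dom, v = Form.val (I.glue ω hV.2.2.2) A (Fin.snoc ρ d)}
      with hT
    have hTdesc : ∀ d : I.Dom, Form.val (I.glue ω hV.2.2.2) A (Fin.snoc ρ d) =
        if Form.val I A (Fin.snoc ρ d) ≤ ω then Form.val I A (Fin.snoc ρ d) else 1 :=
      fun d => ih hA (Fin.snoc ρ d)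
    obtain ⟨d⟩ := I.dom_nonempty
    have hSne : S.Nonempty := ⟨_, d, rfl⟩
    have hTne : T.Nonempty := ⟨_, d, rfl⟩
    have hSbdd : BddBelow S := ⟨0, by rintro v ⟨e, rfl⟩; exact hlb _ (val_mem hV I A _)⟩
    have hTbdd : BddBelow T := ⟨0, by
      rintro v ⟨e, rfl⟩; exact hlb _ (val_mem hV (I.glue ω hV.2.2.2) A _)⟩
    by_cases h : sInf S ≤ ω
    · rw [if_pos h]
      have hex : ∃ e : I.Dom, Form.val I A (Fin.snoc ρ e) ≤ ω := by
        by_contra hno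
        push_neg at hno
        have : ω + ε ≤ sInf S := by
          apply le_csInf hSne
          rintro v ⟨e, rfl⟩
          by_contra hv
          push_neg at hv
          have hmem : Form.val I A (Fin.snoc ρ e) ∈ V ∩ Set.Ioo ω (ω + ε) :=
            ⟨val_mem hV I A _, hno e, hv⟩
          rw [hcap] at hmem; exact hmem
        linarith
      obtain ⟨e₀, he₀⟩ := hex
      have hge₀T : Form.val I A (Fin.snoc ρ e₀) ∈ T :=
        ⟨e₀, by rw [hTdesc e₀, if_pos he₀]⟩
      apply le_antisymm
      · apply le_csInf hSne
        rintro v ⟨e, rfl⟩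
        by_cases he : Form.val I A (Fin.snoc ρ e) ≤ ω
        · exact csInf_le hTbdd ⟨e, by rw [hTdesc e, if_pos he]⟩
        · calc sInf T ≤ Form.val I A (Fin.snoc ρ e₀) := csInf_le hTbdd hge₀T
            _ ≤ ω := he₀
            _ ≤ Form.val I A (Fin.snoc ρ e) := le_of_lt (not_le.mp he)
      · apply le_csInf hTne
        rintro v ⟨e, rfl⟩
        rw [hTdesc e]
        by_cases he : Form.val I A (Fin.snoc ρ e) ≤ ω
        · rw [if_pos he]; exact csInf_le hSbdd ⟨e, rfl⟩
        · rw [if_neg he]; linarith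
    · rw [if_neg h]
      have hall : ∀ v ∈ T, v = 1 := by
        rintro v ⟨e, rfl⟩
        rw [hTdesc e]
        have : sInf S ≤ Form.val I A (Fin.snoc ρ e) := csInf_le hSbdd ⟨e, rfl⟩
        rw [if_neg (by push_neg at h; push_neg; linarith)]
      apply le_antisymm
      · obtain ⟨v, hv⟩ := hTne
        calc sInf T ≤ v := csInf_le hTbdd hv
          _ = 1 := hall v hv
      · exact le_csInf hTne fun v hv => le_of_eq (hall v hv).symm
  | ex A ih =>
    intro hA ρ
    simp only [Form.val]
    show _ = if _ ≤ ω then _ else 1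
    set S : Set ℝ := {v : ℝ | ∃ d : I.Dom, v = Form.val I A (Fin.snoc ρ d)} with hS
    set T : Set ℝ := {v : ℝ | ∃ d : I.Dom, v = Form.val (I.glue ω hV.2.2.2) A (Fin.snoc ρ d)}
      with hT
    have hTdesc : ∀ d : I.Dom, Form.val (I.glue ω hV.2.2.2) A (Fin.snoc ρ d) =
        if Form.val I A (Fin.snoc ρ d) ≤ ω then Form.val I A (Fin.snoc ρ d) else 1 :=
      fun d => ih hA (Fin.snoc ρ d)
    obtain ⟨d⟩ := I.dom_nonempty
    have hSne : S.Nonempty := ⟨_, d, rfl⟩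
    have hTne : T.Nonempty := ⟨_, d, rfl⟩
    have hSbdd : BddAbove S := ⟨1, by rintro v ⟨e, rfl⟩; exact hub _ (val_mem hV I A _)⟩
    have hTbdd : BddAbove T := ⟨1, by
      rintro v ⟨e, rfl⟩; exact hub _ (val_mem hV (I.glue ω hV.2.2.2) A _)⟩
    by_cases h : sSup S ≤ ω
    · rw [if_pos h]
      have hTS : T = S := by
        ext v
        constructor
        · rintro ⟨e, rfl⟩
          have he : Form.val I A (Fin.snoc ρ e) ≤ ω :=
            le_trans (le_csSup hSbdd ⟨e, rfl⟩) h
          exact ⟨e, by rw [hTdesc e, if_pos he]⟩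
        · rintro ⟨e, rfl⟩
          have he : Form.val I A (Fin.snoc ρ e) ≤ ω :=
            le_trans (le_csSup hSbdd ⟨e, rfl⟩) h
          exact ⟨e, by rw [hTdesc e, if_pos he]⟩
      show sSup T = sSup S
      rw [hTS]
    · rw [if_neg h]
      have hex : ∃ e : I.Dom, ¬ Form.val I A (Fin.snoc ρ e) ≤ ω := by
        by_contra hno
        push_neg at hno
        exact h (csSup_le hSne (by rintro v ⟨e, rfl⟩; exact hno e))
      obtain ⟨e₀, he₀⟩ := hex
      have h1T : (1:ℝ) ∈ T := ⟨e₀, by rw [hTdesc e₀, if_neg he₀]⟩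
      apply le_antisymm
      · apply csSup_le hTne
        rintro v ⟨e, rfl⟩
        exact hub _ (val_mem hV (I.glue ω hV.2.2.2) A _)
      · exact le_csSup hTbdd h1T


end GodelPaper
end
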